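/- For all positive semidefinite d×d matrices δ and θ with tr(δ) ≤ 1 and tr(θ) ≤ 1, and every schedule s: t_s(δ) ≤ t_s(θ) + ‖δ − θ‖_*, where ‖A‖_* = tr(√(A†A)) is the trace norm; consequently t(δ) ≤ t(θ) + ‖δ − θ‖_*. -/

import Mathlib

noncomputable section
open Matrix
open scoped ComplexOrder

variable {d m r : ℕ}

/-- One step of process `i`: `T_i(ρ) = E_i(M₁ ρ M₁†) = ∑_j (E_{i,j} M₁) ρ (E_{i,j} M₁)†`. -/
def Tstep (E : Fin m → Fin r → Matrix (Fin d) (Fin d) ℂ)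
    (M1 : Matrix (Fin d) (Fin d) ℂ) (i : Fin m)
    (ρ : Matrix (Fin d) (Fin d) ℂ) : Matrix (Fin d) (Fin d) ℂ :=
  ∑ j, (E i j * M1) * ρ * (E i j * M1)ᴴ

/-- `T_f` for a word `f = s₁⋯s_n`: apply `T_{s₁}` first, then `T_{s₂}`, …, `T_{s_n}`. -/
def Tword (E : Fin m → Fin r → Matrix (Fin d) (Fin d) ℂ)
    (M1 : Matrix (Fin d) (Fin d) ℂ) (f : List (Fin m))
    (ρ : Matrix (Fin d) (Fin d) ℂ) : Matrix (Fin d) (Fin d) ℂ :=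
  f.foldl (fun σ k => Tstep E M1 k σ) ρ

/-- The support of a matrix: its column space, as a subspace of `ℂ^d`. -/
def supp (A : Matrix (Fin d) (Fin d) ℂ) : Submodule ℂ (Fin d → ℂ) :=
  LinearMap.range (Matrix.toLin' A)

/-- Length-`n` prefix of a schedule. -/
def prefixn (s : ℕ → Fin m) (n : ℕ) : List (Fin m) :=
  List.ofFn (fun i : Fin n => s i)

/-- Termination probability within a word `f`. -/
def tWord (E : Fin m → Fin r → Matrix (Fin d) (Fin d) ℂ)
    (M0 M1 : Matrix (Fin d) (Fin d) ℂ) (f : List (Fin m))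
    (ρ : Matrix (Fin d) (Fin d) ℂ) : ℝ :=
  ∑ n ∈ Finset.range (f.length + 1),
    (M0 * Tword E M1 (f.take n) ρ * M0ᴴ).trace.re

/-- Termination probability along a schedule `s`. -/
def tSched (E : Fin m → Fin r → Matrix (Fin d) (Fin d) ℂ)
    (M0 M1 : Matrix (Fin d) (Fin d) ℂ) (s : ℕ → Fin m)
    (ρ : Matrix (Fin d) (Fin d) ℂ) : ℝ :=
  ∑' n : ℕ, (M0 * Tword E M1 (prefixn s n) ρ * M0ᴴ).trace.re

/-- Termination probability `t(ρ)`: infimum over all schedules. -/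
def tInf (E : Fin m → Fin r → Matrix (Fin d) (Fin d) ℂ)
    (M0 M1 : Matrix (Fin d) (Fin d) ℂ)
    (ρ : Matrix (Fin d) (Fin d) ℂ) : ℝ :=
  ⨅ s : ℕ → Fin m, tSched E M0 M1 s ρ

/-- The reachable space `H_{R(ρ)}`. -/
def HR (E : Fin m → Fin r → Matrix (Fin d) (Fin d) ℂ)
    (M1 : Matrix (Fin d) (Fin d) ℂ)
    (ρ : Matrix (Fin d) (Fin d) ℂ) : Submodule ℂ (Fin d → ℂ) :=
  ⨆ f : List (Fin m), supp (Tword E M1 f ρ)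

/-- The average super-operator `T = (1/m) ∑ T_i`. -/
def Tavg (E : Fin m → Fin r → Matrix (Fin d) (Fin d) ℂ)
    (M1 : Matrix (Fin d) (Fin d) ℂ)
    (ρ : Matrix (Fin d) (Fin d) ℂ) : Matrix (Fin d) (Fin d) ℂ :=
  ((m : ℂ)⁻¹) • ∑ i : Fin m, Tstep E M1 i ρ

/-- `H_{R̄_n(ρ)} = ⋁_{k=0}^n supp(T^k(ρ))`. -/
def HRbar (E : Fin m → Fin r → Matrix (Fin d) (Fin d) ℂ)
    (M1 : Matrix (Fin d) (Fin d) ℂ)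
    (ρ : Matrix (Fin d) (Fin d) ℂ) (n : ℕ) : Submodule ℂ (Fin d → ℂ) :=
  ⨆ k : Fin (n + 1), supp ((Tavg E M1)^[k] ρ)

/-- Reachable termination probability `h(ρ)`. -/
def hProb (E : Fin m → Fin r → Matrix (Fin d) (Fin d) ℂ)
    (M0 M1 : Matrix (Fin d) (Fin d) ℂ)
    (ρ : Matrix (Fin d) (Fin d) ℂ) : ℝ :=
  sInf { x : ℝ | ∃ σ : Matrix (Fin d) (Fin d) ℂ,
    σ.PosSemidef ∧ σ.trace = 1 ∧ supp σ ≤ HR E M1 ρ ∧ x = tInf E M0 M1 σ }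

/-- `PD_f`: pure states diverging within the word `f`. -/
def PDword (E : Fin m → Fin r → Matrix (Fin d) (Fin d) ℂ)
    (M0 M1 : Matrix (Fin d) (Fin d) ℂ) (f : List (Fin m)) : Set (Fin d → ℂ) :=
  { x : Fin d → ℂ | tWord E M0 M1 f (Matrix.vecMulVec x (star x)) = 0 }

/-- `PD_n`: union of `PD_f` over words of length `n`. -/
def PDn (E : Fin m → Fin r → Matrix (Fin d) (Fin d) ℂ)
    (M0 M1 : Matrix (Fin d) (Fin d) ℂ) (n : ℕ) : Set (Fin d → ℂ) :=
  { x : Fin d → ℂ | ∃ f : List (Fin m), f.length = n ∧ x ∈ PDword E M0 M1 f }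

/-- `PD`: the diverging pure states. -/
def PD (E : Fin m → Fin r → Matrix (Fin d) (Fin d) ℂ)
    (M0 M1 : Matrix (Fin d) (Fin d) ℂ) : Set (Fin d → ℂ) :=
  { x : Fin d → ℂ | ∃ s : ℕ → Fin m, tSched E M0 M1 s (Matrix.vecMulVec x (star x)) = 0 }

/-- The positive semidefinite square root of a PSD matrix (the definition `Matrix.PosSemidef.sqrt`
of the older Mathlib, which has since been removed). -/
def Matrix.PosSemidef.sqrt {n : Type*} [Fintype n] [DecidableEq n] {A : Matrix n n ℂ}
    (hA : A.PosSemidef) : Matrix n n ℂ :=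
  hA.1.eigenvectorUnitary.1 * Matrix.diagonal ((↑) ∘ (fun x : ℝ => Real.sqrt x) ∘ hA.1.eigenvalues) *
    (star hA.1.eigenvectorUnitary : Matrix n n ℂ)

/-- The trace norm `‖A‖_* = tr √(A†A)`. -/
def traceNorm (A : Matrix (Fin d) (Fin d) ℂ) : ℝ :=
  (Matrix.posSemidef_conjTranspose_mul_self A).sqrt.trace.re

section Aux

variable (E : Fin m → Fin r → Matrix (Fin d) (Fin d) ℂ)
variable (M0 M1 : Matrix (Fin d) (Fin d) ℂ)

lemma aux_trace_re_nonneg {σ : Matrix (Fin d) (Fin d) ℂ} (h : σ.PosSemidef) :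
    0 ≤ σ.trace.re := by
  have h1 : ∀ i, 0 ≤ (σ i i).re := by
    intro i
    have h2 : 0 ≤ σ i i := h.diag_nonneg
    exact (Complex.le_def.mp h2).1
  have : σ.trace.re = ∑ i, (σ i i).re := by
    simp [Matrix.trace, Matrix.diag, Complex.re_sum]
  rw [this]
  exact Finset.sum_nonneg fun i _ => h1 i

open MatrixOrder in
lemma aux_eq_sqrt {A B : Matrix (Fin d) (Fin d) ℂ} (hB : B.PosSemidef) (hA : A.PosSemidef)
    (h : B ^ 2 = A) : B = hA.sqrt := by
  have e : hA.sqrt = cfc Real.sqrt A := by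
    rw [hA.1.cfc_eq, Matrix.IsHermitian.cfc, Matrix.PosSemidef.sqrt]
    simp [Unitary.conjStarAlgAut_apply]
  rw [e, ← cfcₙ_eq_cfc (f := Real.sqrt) (a := A), ← CFC.sqrt_eq_real_sqrt A hA.nonneg, eq_comm, CFC.sqrt_eq_iff A B hA.nonneg hB.nonneg,
    ← h, sq]

lemma Tword_nil (x : Matrix (Fin d) (Fin d) ℂ) : Tword E M1 [] x = x := rfl

lemma Tword_cons (a : Fin m) (f : List (Fin m)) (x : Matrix (Fin d) (Fin d) ℂ) :
    Tword E M1 (a :: f) x = Tword E M1 f (Tstep E M1 a x) := rfl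

lemma Tword_append (f g : List (Fin m)) (x : Matrix (Fin d) (Fin d) ℂ) :
    Tword E M1 (f ++ g) x = Tword E M1 g (Tword E M1 f x) := by
  simp [Tword, List.foldl_append]

lemma Tstep_add (i : Fin m) (x y : Matrix (Fin d) (Fin d) ℂ) :
    Tstep E M1 i (x + y) = Tstep E M1 i x + Tstep E M1 i y := by
  simp [Tstep, Matrix.mul_add, Matrix.add_mul, Finset.sum_add_distrib]

lemma Tstep_neg (i : Fin m) (x : Matrix (Fin d) (Fin d) ℂ) :
    Tstep E M1 i (-x) = -Tstep E M1 i x := by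
  simp [Tstep, Matrix.mul_neg, Matrix.neg_mul]

lemma Tword_add (f : List (Fin m)) (x y : Matrix (Fin d) (Fin d) ℂ) :
    Tword E M1 f (x + y) = Tword E M1 f x + Tword E M1 f y := by
  induction f generalizing x y with
  | nil => rfl
  | cons a f ih => rw [Tword_cons, Tword_cons, Tword_cons, Tstep_add, ih]

lemma Tword_neg (f : List (Fin m)) (x : Matrix (Fin d) (Fin d) ℂ) :
    Tword E M1 f (-x) = -Tword E M1 f x := by
  induction f generalizing x with
  | nil => rfl
  | cons a f ih => rw [Tword_cons, Tword_cons, Tstep_neg, ih]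

lemma Tword_sub (f : List (Fin m)) (x y : Matrix (Fin d) (Fin d) ℂ) :
    Tword E M1 f (x - y) = Tword E M1 f x - Tword E M1 f y := by
  rw [sub_eq_add_neg, Tword_add, Tword_neg, sub_eq_add_neg]

lemma Tstep_posSemidef (i : Fin m) {x : Matrix (Fin d) (Fin d) ℂ} (hx : x.PosSemidef) :
    (Tstep E M1 i x).PosSemidef := by
  unfold Tstep
  classical
  refine Finset.sum_induction _ _ (fun a b ha hb => ha.add hb) Matrix.PosSemidef.zero
    (fun j _ => hx.mul_mul_conjTranspose_same (E i j * M1))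

lemma Tword_posSemidef (f : List (Fin m)) {x : Matrix (Fin d) (Fin d) ℂ}
    (hx : x.PosSemidef) : (Tword E M1 f x).PosSemidef := by
  induction f generalizing x with
  | nil => exact hx
  | cons a f ih => exact ih (Tstep_posSemidef E M1 a hx)

lemma trace_Tstep (hE : ∀ i, ∑ j, (E i j)ᴴ * E i j = 1) (i : Fin m)
    (x : Matrix (Fin d) (Fin d) ℂ) :
    (Tstep E M1 i x).trace = (M1ᴴ * M1 * x).trace := by
  unfold Tstep
  rw [Matrix.trace_sum]
  have h1 : ∀ j, ((E i j * M1) * x * (E i j * M1)ᴴ).trace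
      = (M1ᴴ * ((E i j)ᴴ * E i j) * M1 * x).trace := by
    intro j
    rw [Matrix.trace_mul_cycle]
    congr 1
    simp only [Matrix.conjTranspose_mul, Matrix.mul_assoc]
  calc ∑ j, ((E i j * M1) * x * (E i j * M1)ᴴ).trace
      = ∑ j, (M1ᴴ * ((E i j)ᴴ * E i j) * M1 * x).trace := by
        exact Finset.sum_congr rfl fun j _ => h1 j
    _ = (M1ᴴ * (∑ j, (E i j)ᴴ * E i j) * M1 * x).trace := by
        rw [← Matrix.trace_sum]
        congr 1
        simp [Finset.mul_sum, Finset.sum_mul]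
    _ = (M1ᴴ * M1 * x).trace := by rw [hE i, Matrix.mul_one]

lemma trace_M0_step (hE : ∀ i, ∑ j, (E i j)ᴴ * E i j = 1)
    (hM : M0ᴴ * M0 + M1ᴴ * M1 = 1) (i : Fin m) (σ : Matrix (Fin d) (Fin d) ℂ) :
    (M0 * σ * M0ᴴ).trace = σ.trace - (Tstep E M1 i σ).trace := by
  rw [trace_Tstep E M1 hE, Matrix.trace_mul_cycle]
  have h1 : M0ᴴ * M0 = 1 - M1ᴴ * M1 := by
    rw [← hM]; abel
  rw [h1, Matrix.sub_mul, Matrix.trace_sub, Matrix.one_mul]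

lemma prefixn_succ (s : ℕ → Fin m) (n : ℕ) :
    prefixn s (n + 1) = prefixn s n ++ [s n] := by
  rw [prefixn, List.ofFn_succ']
  simp [prefixn, List.concat_eq_append]

lemma tsched_summable_and_le (hE : ∀ i, ∑ j, (E i j)ᴴ * E i j = 1)
    (hM : M0ᴴ * M0 + M1ᴴ * M1 = 1) (s : ℕ → Fin m)
    {ρ : Matrix (Fin d) (Fin d) ℂ} (hρ : ρ.PosSemidef) :
    Summable (fun n => (M0 * Tword E M1 (prefixn s n) ρ * M0ᴴ).trace.re) ∧
    tSched E M0 M1 s ρ ≤ ρ.trace.re := by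
  set g : ℕ → Matrix (Fin d) (Fin d) ℂ := fun n => Tword E M1 (prefixn s n) ρ with hgdef
  have hg : ∀ n, (g n).PosSemidef := fun n => Tword_posSemidef E M1 _ hρ
  have hterm : ∀ n, (M0 * g n * M0ᴴ).trace.re = (g n).trace.re - (g (n+1)).trace.re := by
    intro n
    have h1 : g (n+1) = Tstep E M1 (s n) (g n) := by
      simp only [hgdef, prefixn_succ, Tword_append]
      rfl
    rw [h1, trace_M0_step E M0 M1 hE hM, Complex.sub_re]
  have hnn : ∀ n, 0 ≤ (M0 * g n * M0ᴴ).trace.re := fun n =>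
    aux_trace_re_nonneg ((hg n).mul_mul_conjTranspose_same M0)
  have hg0 : g 0 = ρ := rfl
  have hpart : ∀ N, ∑ n ∈ Finset.range N, (M0 * g n * M0ᴴ).trace.re ≤ ρ.trace.re := by
    intro N
    have h2 : ∑ n ∈ Finset.range N, (M0 * g n * M0ᴴ).trace.re
        = (g 0).trace.re - (g N).trace.re := by
      simp only [hterm]
      exact Finset.sum_range_sub' (fun n => (g n).trace.re) N
    rw [h2, hg0]
    have := aux_trace_re_nonneg (hg N)
    linarith
  exact ⟨summable_of_sum_range_le hnn hpart, Real.tsum_le_of_sum_range_le hnn hpart⟩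

lemma exists_decomp (A : Matrix (Fin d) (Fin d) ℂ) (hA : A.IsHermitian) :
    ∃ P N : Matrix (Fin d) (Fin d) ℂ, P.PosSemidef ∧ N.PosSemidef ∧
      A = P - N ∧ P.trace.re ≤ traceNorm A := by
  classical
  set U : Matrix (Fin d) (Fin d) ℂ := (hA.eigenvectorUnitary : Matrix (Fin d) (Fin d) ℂ)
    with hU
  set ev : Fin d → ℝ := hA.eigenvalues with hev
  have hUU : Uᴴ * U = 1 := by
    rw [← Matrix.star_eq_conjTranspose]
    exact Matrix.mem_unitaryGroup_iff'.mp hA.eigenvectorUnitary.2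
  set P : Matrix (Fin d) (Fin d) ℂ :=
    U * Matrix.diagonal (fun i => ((max (ev i) 0 : ℝ) : ℂ)) * Uᴴ with hP
  set N : Matrix (Fin d) (Fin d) ℂ :=
    U * Matrix.diagonal (fun i => ((max (-ev i) 0 : ℝ) : ℂ)) * Uᴴ with hN
  set B : Matrix (Fin d) (Fin d) ℂ :=
    U * Matrix.diagonal (fun i => ((|ev i| : ℝ) : ℂ)) * Uᴴ with hB
  have hPpsd : P.PosSemidef := by
    refine (Matrix.posSemidef_diagonal_iff.mpr fun i => ?_).mul_mul_conjTranspose_same U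
    exact Complex.zero_le_real.mpr (le_max_right _ _)
  have hNpsd : N.PosSemidef := by
    refine (Matrix.posSemidef_diagonal_iff.mpr fun i => ?_).mul_mul_conjTranspose_same U
    exact Complex.zero_le_real.mpr (le_max_right _ _)
  have hBpsd : B.PosSemidef := by
    refine (Matrix.posSemidef_diagonal_iff.mpr fun i => ?_).mul_mul_conjTranspose_same U
    exact Complex.zero_le_real.mpr (abs_nonneg _)
  have hspec : A = U * Matrix.diagonal (fun i => ((ev i : ℝ) : ℂ)) * Uᴴ := by
    have := hA.spectral_theorem
    rw [this]
    rfl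
  have hPN : A = P - N := by
    rw [hspec, hP, hN, ← Matrix.sub_mul, ← Matrix.mul_sub, Matrix.diagonal_sub]
    have hfun : (fun i => ((max (ev i) 0 : ℝ) : ℂ) - ((max (-ev i) 0 : ℝ) : ℂ))
        = fun i => ((ev i : ℝ) : ℂ) := by
      funext i
      rw [← Complex.ofReal_sub, max_zero_sub_max_neg_zero_eq_self]
    rw [hfun]
  have htraceUDU : ∀ c : Fin d → ℝ,
      (U * Matrix.diagonal (fun i => ((c i : ℝ) : ℂ)) * Uᴴ).trace
        = ((∑ i, c i : ℝ) : ℂ) := by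
    intro c
    rw [Matrix.trace_mul_cycle, hUU, Matrix.one_mul, Matrix.trace_diagonal]
    push_cast
    rfl
  have hBsq : B ^ 2 = (A)ᴴ * A := by
    have hAA : (A)ᴴ * A = A * A := by rw [hA.eq]
    rw [hAA, hspec, hB, pow_two]
    calc (U * Matrix.diagonal (fun i => ((|ev i| : ℝ) : ℂ)) * Uᴴ)
          * (U * Matrix.diagonal (fun i => ((|ev i| : ℝ) : ℂ)) * Uᴴ)
        = U * (Matrix.diagonal (fun i => ((|ev i| : ℝ) : ℂ))
          * (Uᴴ * U) * Matrix.diagonal (fun i => ((|ev i| : ℝ) : ℂ))) * Uᴴ := by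
          simp only [Matrix.mul_assoc]
      _ = U * Matrix.diagonal (fun i => ((ev i : ℝ) : ℂ) * ((ev i : ℝ) : ℂ)) * Uᴴ := by
          rw [hUU, Matrix.mul_one, Matrix.diagonal_mul_diagonal]
          have habs : (fun i => ((|ev i| : ℝ) : ℂ) * ((|ev i| : ℝ) : ℂ))
              = fun i => ((ev i : ℝ) : ℂ) * ((ev i : ℝ) : ℂ) := by
            funext i
            rw [← Complex.ofReal_mul, ← Complex.ofReal_mul, abs_mul_abs_self]
          rw [habs]
      _ = (U * Matrix.diagonal (fun i => ((ev i : ℝ) : ℂ)) * Uᴴ)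
          * (U * Matrix.diagonal (fun i => ((ev i : ℝ) : ℂ)) * Uᴴ) := by
          simp only [Matrix.mul_assoc]
          rw [← Matrix.mul_assoc Uᴴ U, hUU, Matrix.one_mul,
            ← Matrix.mul_assoc (Matrix.diagonal _), Matrix.diagonal_mul_diagonal]
  have hBsqrt : B = (Matrix.posSemidef_conjTranspose_mul_self A).sqrt :=
    aux_eq_sqrt hBpsd (Matrix.posSemidef_conjTranspose_mul_self A) hBsq
  refine ⟨P, N, hPpsd, hNpsd, hPN, ?_⟩
  have h1 : P.trace.re = ∑ i, max (ev i) 0 := by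
    rw [hP, htraceUDU, Complex.ofReal_re]
  have h2 : traceNorm A = ∑ i, |ev i| := by
    rw [traceNorm, ← hBsqrt, hB, htraceUDU, Complex.ofReal_re]
  rw [h1, h2]
  exact Finset.sum_le_sum fun i _ => max_le (le_abs_self _) (abs_nonneg _)

end Aux

/-- `t_s(δ) ≤ t_s(θ) + ‖δ − θ‖_*`, and consequently
`t(δ) ≤ t(θ) + ‖δ − θ‖_*`. -/
theorem tSched_le_add_traceNorm (d m r : ℕ) (hd : 0 < d) (hm : 0 < m)
    (E : Fin m → Fin r → Matrix (Fin d) (Fin d) ℂ)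
    (hE : ∀ i, ∑ j, (E i j)ᴴ * E i j = 1)
    (M0 M1 : Matrix (Fin d) (Fin d) ℂ)
    (hM : M0ᴴ * M0 + M1ᴴ * M1 = 1)
    (δ θ : Matrix (Fin d) (Fin d) ℂ)
    (hδ : δ.PosSemidef) (hθ : θ.PosSemidef)
    (htrδ : δ.trace ≤ 1) (htrθ : θ.trace ≤ 1) :
    (∀ s : ℕ → Fin m,
      tSched E M0 M1 s δ ≤ tSched E M0 M1 s θ + traceNorm (δ - θ)) ∧
    tInf E M0 M1 δ ≤ tInf E M0 M1 θ + traceNorm (δ - θ) := by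
  obtain ⟨P, N, hP, hN, hPN, hPle⟩ := exists_decomp (δ - θ) (hδ.1.sub hθ.1)
  have hδeq : δ = θ + P - N := by
    have h := hPN
    rw [sub_eq_iff_eq_add] at h
    rw [h]; abel
  have key : ∀ s : ℕ → Fin m,
      tSched E M0 M1 s δ ≤ tSched E M0 M1 s θ + traceNorm (δ - θ) := by
    intro s
    obtain ⟨hSθ, hLθ⟩ := tsched_summable_and_le E M0 M1 hE hM s hθ
    obtain ⟨hSP, hLP⟩ := tsched_summable_and_le E M0 M1 hE hM s hP
    obtain ⟨hSN, hLN⟩ := tsched_summable_and_le E M0 M1 hE hM s hN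
    have hsplit : ∀ n, (M0 * Tword E M1 (prefixn s n) δ * M0ᴴ).trace.re
        = ((M0 * Tword E M1 (prefixn s n) θ * M0ᴴ).trace.re
          + (M0 * Tword E M1 (prefixn s n) P * M0ᴴ).trace.re)
          - (M0 * Tword E M1 (prefixn s n) N * M0ᴴ).trace.re := by
      intro n
      rw [hδeq, Tword_sub, Tword_add, Matrix.mul_sub, Matrix.mul_add, Matrix.sub_mul,
        Matrix.add_mul, Matrix.trace_sub, Matrix.trace_add, Complex.sub_re, Complex.add_re]
    have hNnn : 0 ≤ ∑' n, (M0 * Tword E M1 (prefixn s n) N * M0ᴴ).trace.re :=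
      tsum_nonneg fun n => aux_trace_re_nonneg
        ((Tword_posSemidef E M1 _ hN).mul_mul_conjTranspose_same M0)
    have heq : tSched E M0 M1 s δ
        = (tSched E M0 M1 s θ + ∑' n, (M0 * Tword E M1 (prefixn s n) P * M0ᴴ).trace.re)
          - ∑' n, (M0 * Tword E M1 (prefixn s n) N * M0ᴴ).trace.re := by
      unfold tSched
      rw [tsum_congr hsplit, Summable.tsum_sub (hSθ.add hSP) hSN, Summable.tsum_add hSθ hSP]
    rw [heq]
    have hPfinal : P.trace.re ≤ traceNorm (δ - θ) := hPle
    have : (∑' n, (M0 * Tword E M1 (prefixn s n) P * M0ᴴ).trace.re) ≤ traceNorm (δ - θ) :=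
      hLP.trans hPfinal
    linarith
  refine ⟨key, ?_⟩
  haveI : Nonempty (Fin m) := Fin.pos_iff_nonempty.mp hm
  have hbdd : BddBelow (Set.range fun s : ℕ → Fin m => tSched E M0 M1 s δ) := by
    refine ⟨0, ?_⟩
    rintro x ⟨s, rfl⟩
    exact tsum_nonneg fun n => aux_trace_re_nonneg
      ((Tword_posSemidef E M1 _ hδ).mul_mul_conjTranspose_same M0)
  have h2 : ∀ s : ℕ → Fin m, tInf E M0 M1 δ ≤ tSched E M0 M1 s θ + traceNorm (δ - θ) :=
    fun s => (ciInf_le hbdd s).trans (key s)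
  have h3 : tInf E M0 M1 δ - traceNorm (δ - θ) ≤ tInf E M0 M1 θ :=
    le_ciInf fun s => by linarith [h2 s]
  linarith
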